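/- For 1 < p < ∞ with conjugate exponent q = p/(p-1), for any sequences (a_m)_{m≥2} ∈ ℓ^p and (b_n)_{n≥2} ∈ ℓ^q of nonnegative reals, ∑_{m,n≥2} a_m b_n m^(-1/q) n^(-1/p) / log(mn) ≤ (π/sin(π/p)) ‖a‖_p ‖b‖_q. -/

import Mathlib

open Real Set MeasureTheory

-- Step 1: real Beta value
lemma beta_real {r : ℝ} (hr0 : 0 < r) (hr1 : r < 1) :
    ∫ t in (0:ℝ)..1, t ^ (-r) * (1 - t) ^ (r - 1) = π / Real.sin (π * r) := by
  have h1 : (0:ℝ) < 1 - r := by linarith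
  have hc := Complex.Gamma_mul_Gamma_eq_betaIntegral
    (s := (1 - r : ℝ)) (t := (r : ℝ)) (by simpa using h1) (by simpa using hr0)
  rw [show ((1 - r : ℝ) : ℂ) + ((r : ℝ) : ℂ) = 1 by push_cast; ring,
    Complex.Gamma_one, one_mul] at hc
  have hbeta : Complex.betaIntegral ((1 - r : ℝ) : ℂ) ((r : ℝ) : ℂ)
      = ((∫ t in (0:ℝ)..1, t ^ (-r) * (1 - t) ^ (r - 1) : ℝ) : ℂ) := by
    rw [Complex.betaIntegral, ← intervalIntegral.integral_ofReal]
    refine intervalIntegral.integral_congr fun t ht => ?_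
    rw [Set.uIcc_of_le (by norm_num : (0:ℝ) ≤ 1)] at ht
    rw [show (((1 - r:ℝ):ℂ) - 1) = ((-r : ℝ) : ℂ) by push_cast; ring,
      show (((r:ℝ):ℂ) - 1) = ((r - 1 : ℝ) : ℂ) by push_cast; ring,
      show (1 - (t:ℂ)) = ((1 - t : ℝ) : ℂ) by push_cast; ring,
      ← Complex.ofReal_cpow ht.1, ← Complex.ofReal_cpow (by linarith [ht.2] : (0:ℝ) ≤ 1 - t)]
    push_cast
    ring
  rw [hbeta] at hc
  have hrefl := Complex.Gamma_mul_Gamma_one_sub ((1 - r : ℝ) : ℂ)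
  rw [show (1 : ℂ) - ((1 - r : ℝ) : ℂ) = ((r : ℝ) : ℂ) by push_cast; ring] at hrefl
  rw [hc] at hrefl
  have : ((∫ t in (0:ℝ)..1, t ^ (-r) * (1 - t) ^ (r - 1) : ℝ) : ℂ)
      = ((π / Real.sin (π * r) : ℝ) : ℂ) := by
    rw [hrefl]
    rw [show (π : ℂ) * ((1 - r :ℝ) : ℂ) = (π : ℂ) - ((π * r : ℝ) : ℂ) by push_cast; ring,
      Complex.sin_pi_sub]
    rw [← Complex.ofReal_sin]
    norm_cast
  exact_mod_cast this

-- Step 2: ∫ s in Ioi 0, s ^ (-r) / (1+s) = π / sin (π r)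
lemma I_val {r : ℝ} (hr0 : 0 < r) (hr1 : r < 1) :
    ∫ s in Ioi (0:ℝ), s ^ (-r) * (1 + s)⁻¹ = π / Real.sin (π * r) := by
  have himg : (fun t : ℝ => t / (1 - t)) '' Ioo 0 1 = Ioi (0:ℝ) := by
    ext s
    constructor
    · rintro ⟨t, ⟨ht0, ht1⟩, rfl⟩
      exact div_pos ht0 (by linarith)
    · intro hs
      refine ⟨s / (1 + s), ⟨div_pos hs (by linarith [hs.out]), ?_⟩, ?_⟩
      · rw [div_lt_one (by linarith [hs.out])]; linarith [hs.out]
      · have h1s : (0:ℝ) < 1 + s := by linarith [hs.out]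
        field_simp; ring
  have hderiv : ∀ t ∈ Ioo (0:ℝ) 1, HasDerivWithinAt (fun t : ℝ => t / (1 - t))
      (((1 - t) ^ 2)⁻¹) (Ioo 0 1) t := by
    intro t ht
    have h1t : (1:ℝ) - t ≠ 0 := by linarith [ht.2]
    have := (hasDerivAt_id' t).div ((hasDerivAt_id' t).const_sub 1) h1t
    exact (by simpa using this.hasDerivWithinAt : HasDerivWithinAt ((fun x : ℝ => x) / fun x => 1 - x) (((1 - t) ^ 2)⁻¹) (Ioo 0 1) t)
  have hinj : InjOn (fun t : ℝ => t / (1 - t)) (Ioo 0 1) := by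
    intro u hu v hv h
    have hu1 : (1:ℝ) - u ≠ 0 := by linarith [hu.2]
    have hv1 : (1:ℝ) - v ≠ 0 := by linarith [hv.2]
    field_simp at h
    linarith
  have key := integral_image_eq_integral_abs_deriv_smul measurableSet_Ioo hderiv hinj
    (fun s => s ^ (-r) * (1 + s)⁻¹)
  rw [himg] at key
  rw [key]
  have : EqOn (fun t : ℝ => |((1 - t) ^ 2)⁻¹| • ((t / (1 - t)) ^ (-r) * (1 + t / (1 - t))⁻¹))
      (fun t : ℝ => t ^ (-r) * (1 - t) ^ (r - 1)) (Ioo 0 1) := by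
    intro t ht
    have h0t : (0:ℝ) < t := ht.1
    have h1t : (0:ℝ) < 1 - t := by linarith [ht.2]
    have e1 : (1 + t / (1 - t)) = (1 - t)⁻¹ := by field_simp; ring
    simp only [smul_eq_mul, e1, inv_inv]
    rw [abs_of_nonneg (by positivity), Real.div_rpow h0t.le h1t.le,
      Real.rpow_neg h0t.le, Real.rpow_neg h1t.le, Real.rpow_sub h1t, Real.rpow_one]
    field_simp
  rw [setIntegral_congr_fun measurableSet_Ioo this, ← integral_Ioc_eq_integral_Ioo,
    ← intervalIntegral.integral_of_le (by norm_num : (0:ℝ) ≤ 1)]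
  exact beta_real hr0 hr1

-- Step 3: integrability
lemma g_integrable {r x : ℝ} (hr0 : 0 < r) (hr1 : r < 1) (hx : 0 < x) :
    IntegrableOn (fun u : ℝ => u ^ (-r) * (x + u)⁻¹) (Ioi 0) := by
  have hmeas : Measurable fun u : ℝ => u ^ (-r) * (x + u)⁻¹ :=
    (measurable_id.pow_const _).mul ((measurable_const.add measurable_id).inv)
  have h1 : IntegrableOn (fun u : ℝ => u ^ (-r) * (x + u)⁻¹) (Ioc 0 1) := by
    have hbase : IntegrableOn (fun u : ℝ => u ^ (-r) * x⁻¹) (Ioc 0 1) := by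
      apply Integrable.mul_const
      have hii := intervalIntegral.intervalIntegrable_rpow' (a := 0) (b := 1) (r := -r)
        (by linarith)
      rwa [intervalIntegrable_iff_integrableOn_Ioc_of_le (by norm_num : (0:ℝ) ≤ 1)] at hii
    refine hbase.mono' (hmeas.aestronglyMeasurable.restrict) ?_
    refine (ae_restrict_iff' measurableSet_Ioc).2 (Filter.Eventually.of_forall fun u hu => ?_)
    have hu0 : (0:ℝ) < u := hu.1
    rw [Real.norm_eq_abs, abs_of_nonneg (by positivity)]
    have : (x + u)⁻¹ ≤ x⁻¹ := by
      rw [inv_le_inv₀ (by linarith) hx]; linarith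
    exact mul_le_mul_of_nonneg_left this (by positivity)
  have h2 : IntegrableOn (fun u : ℝ => u ^ (-r) * (x + u)⁻¹) (Ioi 1) := by
    have hbase : IntegrableOn (fun u : ℝ => u ^ (-(r+1))) (Ioi 1) :=
      integrableOn_Ioi_rpow_of_lt (by linarith) one_pos
    refine hbase.mono' (hmeas.aestronglyMeasurable.restrict) ?_
    refine (ae_restrict_iff' measurableSet_Ioi).2 (Filter.Eventually.of_forall fun u hu => ?_)
    have hu1 : (1:ℝ) < u := hu
    have hu0 : (0:ℝ) < u := by linarith
    rw [Real.norm_eq_abs, abs_of_nonneg (by positivity)]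
    have h1 : (x + u)⁻¹ ≤ u⁻¹ := by
      rw [inv_le_inv₀ (by linarith) hu0]; linarith
    calc u ^ (-r) * (x + u)⁻¹ ≤ u ^ (-r) * u⁻¹ :=
          mul_le_mul_of_nonneg_left h1 (by positivity)
      _ = u ^ (-(r+1)) := by
          rw [show -(r+1) = -r + (-1) by ring, Real.rpow_add hu0, Real.rpow_neg_one]
  have : Ioc (0:ℝ) 1 ∪ Ioi 1 = Ioi 0 := Ioc_union_Ioi_eq_Ioi (by norm_num)
  rw [← this]
  exact h1.union h2

-- Step 4: key sum bound
lemma key_sum {r x : ℝ} (hr0 : 0 < r) (hr1 : r < 1) (hx : Real.log 2 ≤ x) :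
    Summable (fun n : {k : ℕ // 2 ≤ k} =>
      ((n : ℕ) : ℝ)⁻¹ * (Real.log (n : ℕ)) ^ (-r) * (x + Real.log (n : ℕ))⁻¹) ∧
    ∑' n : {k : ℕ // 2 ≤ k},
        ((n : ℕ) : ℝ)⁻¹ * (Real.log (n : ℕ)) ^ (-r) * (x + Real.log (n : ℕ))⁻¹
      ≤ π / Real.sin (π * r) * x ^ (-r) := by
  have hx0 : (0:ℝ) < x := lt_of_lt_of_le (Real.log_pos (by norm_num)) hx
  set g : ℝ → ℝ := fun u => u ^ (-r) * (x + u)⁻¹ with hg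
  have hgint : IntegrableOn g (Ioi 0) := g_integrable hr0 hr1 hx0
  have hgnn : ∀ u ∈ Ioi (0:ℝ), 0 ≤ g u := by
    intro u hu
    have : (0:ℝ) < u := hu
    have : (0:ℝ) < x + u := by linarith
    positivity
  -- the intervals
  set S : {k : ℕ // 2 ≤ k} → Set ℝ := fun n => Ioc (Real.log ((n:ℕ) - 1 : ℕ)) (Real.log (n:ℕ))
    with hS
  have hSsub : ∀ n, S n ⊆ Ioi (0:ℝ) := by
    intro n u hu
    have h1 : (1:ℝ) ≤ ((n:ℕ) - 1 : ℕ) := by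
      have := n.2; exact_mod_cast Nat.le_sub_one_of_lt (by omega)
    exact lt_of_le_of_lt (Real.log_nonneg h1) hu.1
  -- term bound
  have hterm : ∀ n : {k : ℕ // 2 ≤ k},
      ((n : ℕ) : ℝ)⁻¹ * (Real.log (n : ℕ)) ^ (-r) * (x + Real.log (n : ℕ))⁻¹
        ≤ ∫ u in S n, g u := by
    intro n
    have hn2 : (2:ℕ) ≤ (n:ℕ) := n.2
    have hn1R : (1:ℝ) ≤ ((n:ℕ) - 1 : ℕ) := by exact_mod_cast Nat.le_sub_one_of_lt (by omega)
    have hnR : (2:ℝ) ≤ ((n:ℕ):ℝ) := by exact_mod_cast hn2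
    have hcast : (((n:ℕ) - 1 : ℕ) : ℝ) = ((n:ℕ):ℝ) - 1 := by
      have : (1:ℕ) ≤ (n:ℕ) := by omega
      push_cast [this]; ring
    have hb0 : (0:ℝ) < Real.log (n:ℕ) := Real.log_pos (by linarith)
    have ha0 : (0:ℝ) ≤ Real.log ((n:ℕ) - 1 : ℕ) := Real.log_nonneg hn1R
    have hab : Real.log ((n:ℕ) - 1 : ℕ) < Real.log (n:ℕ) := by
      apply Real.log_lt_log (by linarith) (by rw [hcast]; linarith)
    set c : ℝ := (Real.log (n:ℕ)) ^ (-r) * (x + Real.log (n:ℕ))⁻¹ with hc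
    have hcnn : 0 ≤ c := by
      have : (0:ℝ) < x + Real.log (n:ℕ) := by linarith
      positivity
    have hlen : ((n:ℕ):ℝ)⁻¹ ≤ Real.log (n:ℕ) - Real.log ((n:ℕ) - 1 : ℕ) := by
      have hlog := Real.log_le_sub_one_of_pos
        (show (0:ℝ) < (((n:ℕ) - 1 : ℕ):ℝ) / ((n:ℕ):ℝ) by
          rw [hcast]; apply div_pos <;> linarith)
      rw [Real.log_div (by rw [hcast]; intro h; linarith) (by intro h; linarith [hnR]),
        hcast] at hlog
      have hne : ((n:ℕ):ℝ) ≠ 0 := by linarith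
      have : (((n:ℕ):ℝ) - 1) / ((n:ℕ):ℝ) - 1 = -((n:ℕ):ℝ)⁻¹ := by field_simp; ring
      rw [this] at hlog
      rw [hcast]
      linarith
    have hint : c * (volume (S n)).toReal ≤ ∫ u in S n, g u := by
      apply setIntegral_ge_of_const_le_real measurableSet_Ioc
      · rw [Real.volume_Ioc]; exact ENNReal.ofReal_ne_top
      · intro u hu
        have hu0 : (0:ℝ) < u := hSsub n hu
        have hub : u ≤ Real.log (n:ℕ) := hu.2
        have h1 : u ^ (-r) ≥ (Real.log (n:ℕ)) ^ (-r) :=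
          Real.antitoneOn_rpow_Ioi_of_exponent_nonpos (by linarith)
            (mem_Ioi.2 hu0) (mem_Ioi.2 hb0) hub
        have h2 : (x + u)⁻¹ ≥ (x + Real.log (n:ℕ))⁻¹ := by
          apply inv_anti₀ (by linarith) (by linarith)
        calc c ≤ u ^ (-r) * (x + Real.log (n:ℕ))⁻¹ := by
              apply mul_le_mul_of_nonneg_right h1 (by positivity)
          _ ≤ u ^ (-r) * (x + u)⁻¹ := by
              apply mul_le_mul_of_nonneg_left h2 (by positivity)
      · exact hgint.mono_set (hSsub n)
    have hvol : (volume (S n)).toReal = Real.log (n:ℕ) - Real.log ((n:ℕ) - 1 : ℕ) := by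
      rw [hS, Real.volume_Ioc, ENNReal.toReal_ofReal (by linarith)]
    calc ((n : ℕ) : ℝ)⁻¹ * (Real.log (n : ℕ)) ^ (-r) * (x + Real.log (n : ℕ))⁻¹
        = c * ((n : ℕ) : ℝ)⁻¹ := by rw [hc]; ring
      _ ≤ c * (volume (S n)).toReal := by
          rw [hvol]; exact mul_le_mul_of_nonneg_left hlen hcnn
      _ ≤ ∫ u in S n, g u := hint
  -- finite sums bounded by integral over Ioi 0
  have hfin : ∀ F : Finset {k : ℕ // 2 ≤ k},
      ∑ n ∈ F, ((n : ℕ) : ℝ)⁻¹ * (Real.log (n : ℕ)) ^ (-r) * (x + Real.log (n : ℕ))⁻¹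
        ≤ ∫ u in Ioi (0:ℝ), g u := by
    intro F
    have hpos : ∀ k : {k : ℕ // 2 ≤ k}, (0:ℝ) < ((k:ℕ):ℝ) := fun k => by
      have := k.2; exact_mod_cast (show 0 < (k:ℕ) by omega)
    have hdisj : (F : Set {k : ℕ // 2 ≤ k}).Pairwise (Function.onFun Disjoint S) := by
      intro m _ n _ hmn
      have hmn' : (m:ℕ) ≠ (n:ℕ) := fun h => hmn (Subtype.ext h)
      rcases hmn'.lt_or_gt with h | h
      · apply Set.Ioc_disjoint_Ioc.2
        refine (min_le_left _ _).trans (le_trans ?_ (le_max_right _ _))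
        apply Real.log_le_log (hpos m)
        have : (m:ℕ) ≤ (n:ℕ) - 1 := by omega
        exact_mod_cast this
      · apply Set.Ioc_disjoint_Ioc.2
        refine (min_le_right _ _).trans (le_trans ?_ (le_max_left _ _))
        apply Real.log_le_log (hpos n)
        have : (n:ℕ) ≤ (m:ℕ) - 1 := by omega
        exact_mod_cast this
    have hUsub : (⋃ n ∈ F, S n) ⊆ Ioi (0:ℝ) := by
      intro u hu
      rcases mem_iUnion₂.1 hu with ⟨n, _, hn⟩
      exact hSsub n hn
    calc ∑ n ∈ F, ((n : ℕ) : ℝ)⁻¹ * (Real.log (n : ℕ)) ^ (-r) * (x + Real.log (n : ℕ))⁻¹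
        ≤ ∑ n ∈ F, ∫ u in S n, g u := Finset.sum_le_sum fun n _ => hterm n
      _ = ∫ u in ⋃ n ∈ F, S n, g u := by
          rw [← integral_biUnion_finset F (fun n _ => measurableSet_Ioc) hdisj
            (fun n _ => hgint.mono_set (hSsub n))]
      _ ≤ ∫ u in Ioi (0:ℝ), g u := by
          apply setIntegral_mono_set hgint
          · exact (ae_restrict_iff' measurableSet_Ioi).2
              (Filter.Eventually.of_forall fun u hu => hgnn u hu)
          · exact Filter.Eventually.of_forall hUsub
  have hIval : ∫ u in Ioi (0:ℝ), g u = π / Real.sin (π * r) * x ^ (-r) := by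
    have hcm := integral_comp_mul_left_Ioi g 0 hx0
    rw [mul_zero] at hcm
    have : ∀ s ∈ Ioi (0:ℝ), g (x * s) = x ^ (-r) * x⁻¹ * (s ^ (-r) * (1 + s)⁻¹) := by
      intro s hs
      have hs0 : (0:ℝ) < s := hs
      rw [hg]
      simp only
      rw [Real.mul_rpow hx0.le hs0.le, show x + x * s = x * (1 + s) by ring, mul_inv]
      ring
    rw [setIntegral_congr_fun measurableSet_Ioi this, integral_const_mul, I_val hr0 hr1] at hcm
    rw [show π / Real.sin (π * r) * x ^ (-r)
        = x * (x ^ (-r) * x⁻¹ * (π / Real.sin (π * r))) by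
      rw [show x * (x ^ (-r) * x⁻¹ * (π / Real.sin (π * r)))
          = x * x⁻¹ * (x ^ (-r) * (π / Real.sin (π * r))) by ring,
        mul_inv_cancel₀ hx0.ne', one_mul]; ring]
    rw [hcm, smul_eq_mul, ← mul_assoc, mul_inv_cancel₀ hx0.ne', one_mul]
  have hsummable : Summable (fun n : {k : ℕ // 2 ≤ k} =>
      ((n : ℕ) : ℝ)⁻¹ * (Real.log (n : ℕ)) ^ (-r) * (x + Real.log (n : ℕ))⁻¹) := by
    apply summable_of_sum_le _ hfin
    intro n
    have hn2 : (2:ℕ) ≤ (n:ℕ) := n.2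
    have hb0 : (0:ℝ) < Real.log (n:ℕ) := Real.log_pos (by exact_mod_cast by omega)
    have : (0:ℝ) < x + Real.log (n:ℕ) := by linarith
    positivity
  exact ⟨hsummable, (Summable.tsum_le_of_sum_le hsummable hfin).trans_eq (by rw [hIval])⟩

-- Step 5: packaged column bound
lemma key_sum' {r : ℝ} (hr0 : 0 < r) (hr1 : r < 1) (m : {k : ℕ // 2 ≤ k}) :
    Summable (fun n : {k : ℕ // 2 ≤ k} => Real.log (m:ℕ) ^ r *
      (((n : ℕ) : ℝ)⁻¹ * (Real.log (n : ℕ)) ^ (-r) * (Real.log (m:ℕ) + Real.log (n : ℕ))⁻¹)) ∧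
    ∑' n : {k : ℕ // 2 ≤ k}, Real.log (m:ℕ) ^ r *
      (((n : ℕ) : ℝ)⁻¹ * (Real.log (n : ℕ)) ^ (-r) * (Real.log (m:ℕ) + Real.log (n : ℕ))⁻¹)
      ≤ π / Real.sin (π * r) := by
  have hx : Real.log 2 ≤ Real.log (m:ℕ) :=
    Real.log_le_log two_pos (by exact_mod_cast m.2)
  have hx0 : (0:ℝ) < Real.log (m:ℕ) := lt_of_lt_of_le (Real.log_pos one_lt_two) hx
  obtain ⟨hs, hle⟩ := key_sum hr0 hr1 hx
  refine ⟨hs.mul_left _, ?_⟩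
  rw [tsum_mul_left]
  calc Real.log (m:ℕ) ^ r * ∑' n : {k : ℕ // 2 ≤ k},
        ((n : ℕ) : ℝ)⁻¹ * (Real.log (n : ℕ)) ^ (-r) * (Real.log (m:ℕ) + Real.log (n : ℕ))⁻¹
      ≤ Real.log (m:ℕ) ^ r * (π / Real.sin (π * r) * Real.log (m:ℕ) ^ (-r)) :=
        mul_le_mul_of_nonneg_left hle (Real.rpow_nonneg hx0.le r)
    _ = π / Real.sin (π * r) * (Real.log (m:ℕ) ^ r * Real.log (m:ℕ) ^ (-r)) := by ring
    _ = π / Real.sin (π * r) := by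
        rw [← Real.rpow_add hx0, add_neg_cancel, Real.rpow_zero, mul_one]

theorem stmt_3 (p : ℝ) (hp : 1 < p) (q : ℝ) (hq : q = p / (p - 1))
    (a b : {k : ℕ // 2 ≤ k} → ℝ)
    (hanneg : ∀ m, 0 ≤ a m) (hbnneg : ∀ n, 0 ≤ b n)
    (ha : Summable fun m => a m ^ p) (hb : Summable fun n => b n ^ q) :
    ∑' m : {k : ℕ // 2 ≤ k}, ∑' n : {k : ℕ // 2 ≤ k},
        a m * b n * ((m : ℕ) : ℝ) ^ (-(1/q)) * ((n : ℕ) : ℝ) ^ (-(1/p))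
          / (Real.log (m : ℕ) + Real.log (n : ℕ))
      ≤ (π / Real.sin (π / p)) * (∑' m, a m ^ p) ^ (1/p) * (∑' n, b n ^ q) ^ (1/q) := by
  have hpq : p.HolderConjugate q := (Real.holderConjugate_iff_eq_conjExponent hp).2 hq
  have hp0 : 0 < p := hpq.pos
  have hq0 : 0 < q := hpq.symm.pos
  have hq1 : 1 < q := hpq.symm.lt
  have h1 : 1/p + 1/q = 1 := by
    rw [one_div, one_div]; exact hpq.inv_add_inv_eq_one
  have hrp0 : 0 < 1/p := by positivity
  have hrp1 : 1/p < 1 := by rw [div_lt_one hp0]; exact hp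
  have hrq0 : 0 < 1/q := by positivity
  have hrq1 : 1/q < 1 := by rw [div_lt_one hq0]; exact hq1
  have hsin : 0 < Real.sin (π / p) :=
    Real.sin_pos_of_pos_of_lt_pi (by positivity)
      (by rw [div_lt_iff₀ hp0]; nlinarith [Real.pi_pos])
  set C : ℝ := π / Real.sin (π / p) with hCdef
  have hC0 : 0 < C := div_pos Real.pi_pos hsin
  have hCq : π / Real.sin (π * (1/q)) = C := by
    rw [show (1:ℝ)/q = 1 - 1/p by linarith, mul_sub, mul_one, mul_one_div,
      Real.sin_pi_sub]
  have hCp : π / Real.sin (π * (1/p)) = C := by rw [mul_one_div]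
  have hlog : ∀ k : {k : ℕ // 2 ≤ k}, 0 < Real.log (k:ℕ) := fun k =>
    Real.log_pos (by exact_mod_cast (show (1:ℕ) < (k:ℕ) by have := k.2; omega))
  have hlog2 : ∀ mn : {k : ℕ // 2 ≤ k} × {k : ℕ // 2 ≤ k},
      0 < Real.log (mn.1:ℕ) + Real.log (mn.2:ℕ) := fun mn => by
    have := hlog mn.1; have := hlog mn.2; linarith
  set F : {k : ℕ // 2 ≤ k} × {k : ℕ // 2 ≤ k} → ℝ := fun mn =>
    a mn.1 * ((Real.log (mn.1:ℕ) / Real.log (mn.2:ℕ)) ^ (1/(p*q)) *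
      ((mn.2 : ℕ) : ℝ) ^ (-(1/p)) * (Real.log (mn.1:ℕ) + Real.log (mn.2:ℕ)) ^ (-(1/p)))
    with hFdef
  set G : {k : ℕ // 2 ≤ k} × {k : ℕ // 2 ≤ k} → ℝ := fun mn =>
    b mn.2 * ((Real.log (mn.2:ℕ) / Real.log (mn.1:ℕ)) ^ (1/(p*q)) *
      ((mn.1 : ℕ) : ℝ) ^ (-(1/q)) * (Real.log (mn.1:ℕ) + Real.log (mn.2:ℕ)) ^ (-(1/q)))
    with hGdef
  have hFnn : ∀ mn, 0 ≤ F mn := fun mn => by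
    have e1 := (hlog mn.1).le; have e2 := (hlog mn.2).le; have e3 := (hlog2 mn).le
    have := hanneg mn.1
    rw [hFdef]
    positivity
  have hGnn : ∀ mn, 0 ≤ G mn := fun mn => by
    have e1 := (hlog mn.1).le; have e2 := (hlog mn.2).le; have e3 := (hlog2 mn).le
    have := hbnneg mn.2
    rw [hGdef]
    positivity
  -- pointwise power identities
  have hFp : ∀ mn, F mn ^ p = a mn.1 ^ p * (Real.log (mn.1:ℕ) ^ (1/q) *
      (((mn.2 : ℕ) : ℝ)⁻¹ * (Real.log (mn.2:ℕ)) ^ (-(1/q)) *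
        (Real.log (mn.1:ℕ) + Real.log (mn.2:ℕ))⁻¹)) := by
    intro mn
    have hm := hlog mn.1; have hn := hlog mn.2; have hmn := hlog2 mn
    have e1 : ((Real.log (mn.1:ℕ) / Real.log (mn.2:ℕ)) ^ (1/(p*q))) ^ p
        = Real.log (mn.1:ℕ) ^ (1/q) * Real.log (mn.2:ℕ) ^ (-(1/q)) := by
      rw [← Real.rpow_mul (by positivity),
        show 1/(p*q)*p = 1/q by field_simp,
        Real.div_rpow hm.le hn.le, Real.rpow_neg hn.le, div_eq_mul_inv]
    have e2 : (((mn.2 : ℕ) : ℝ) ^ (-(1/p))) ^ p = ((mn.2 : ℕ) : ℝ)⁻¹ := by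
      rw [← Real.rpow_mul (Nat.cast_nonneg _),
        show -(1/p)*p = -1 by field_simp, Real.rpow_neg_one]
    have e3 : ((Real.log (mn.1:ℕ) + Real.log (mn.2:ℕ)) ^ (-(1/p))) ^ p
        = (Real.log (mn.1:ℕ) + Real.log (mn.2:ℕ))⁻¹ := by
      rw [← Real.rpow_mul hmn.le,
        show -(1/p)*p = -1 by field_simp, Real.rpow_neg_one]
    rw [hFdef]
    simp only
    rw [Real.mul_rpow (hanneg _) (by positivity),
      Real.mul_rpow (by positivity) (by positivity),
      Real.mul_rpow (by positivity) (by positivity), e1, e2, e3]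
    ring
  have hGq : ∀ mn, G mn ^ q = b mn.2 ^ q * (Real.log (mn.2:ℕ) ^ (1/p) *
      (((mn.1 : ℕ) : ℝ)⁻¹ * (Real.log (mn.1:ℕ)) ^ (-(1/p)) *
        (Real.log (mn.2:ℕ) + Real.log (mn.1:ℕ))⁻¹)) := by
    intro mn
    have hm := hlog mn.1; have hn := hlog mn.2; have hmn := hlog2 mn
    have e1 : ((Real.log (mn.2:ℕ) / Real.log (mn.1:ℕ)) ^ (1/(p*q))) ^ q
        = Real.log (mn.2:ℕ) ^ (1/p) * Real.log (mn.1:ℕ) ^ (-(1/p)) := by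
      rw [← Real.rpow_mul (by positivity),
        show 1/(p*q)*q = 1/p by field_simp,
        Real.div_rpow hn.le hm.le, Real.rpow_neg hm.le, div_eq_mul_inv]
    have e2 : (((mn.1 : ℕ) : ℝ) ^ (-(1/q))) ^ q = ((mn.1 : ℕ) : ℝ)⁻¹ := by
      rw [← Real.rpow_mul (Nat.cast_nonneg _),
        show -(1/q)*q = -1 by field_simp, Real.rpow_neg_one]
    have e3 : ((Real.log (mn.1:ℕ) + Real.log (mn.2:ℕ)) ^ (-(1/q))) ^ q
        = (Real.log (mn.2:ℕ) + Real.log (mn.1:ℕ))⁻¹ := by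
      rw [← Real.rpow_mul hmn.le,
        show -(1/q)*q = -1 by field_simp, Real.rpow_neg_one, add_comm]
    rw [hGdef]
    simp only
    rw [Real.mul_rpow (hbnneg _) (by positivity),
      Real.mul_rpow (by positivity) (by positivity),
      Real.mul_rpow (by positivity) (by positivity), e1, e2, e3]
    ring
  -- column sums
  have hFcol : ∀ m, Summable (fun n : {k : ℕ // 2 ≤ k} => F (m, n) ^ p) ∧
      ∑' n : {k : ℕ // 2 ≤ k}, F (m, n) ^ p ≤ C * a m ^ p := by
    intro m
    obtain ⟨hs, hle⟩ := key_sum' hrq0 hrq1 m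
    have hcongr : ∀ n : {k : ℕ // 2 ≤ k}, a m ^ p * (Real.log (m:ℕ) ^ (1/q) *
        (((n : ℕ) : ℝ)⁻¹ * (Real.log (n:ℕ)) ^ (-(1/q)) *
          (Real.log (m:ℕ) + Real.log (n:ℕ))⁻¹)) = F (m, n) ^ p := fun n =>
      (hFp (m, n)).symm
    constructor
    · exact Summable.congr (hs.mul_left (a m ^ p)) hcongr
    · calc ∑' n : {k : ℕ // 2 ≤ k}, F (m, n) ^ p
          = ∑' n : {k : ℕ // 2 ≤ k}, a m ^ p * (Real.log (m:ℕ) ^ (1/q) *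
            (((n : ℕ) : ℝ)⁻¹ * (Real.log (n:ℕ)) ^ (-(1/q)) *
              (Real.log (m:ℕ) + Real.log (n:ℕ))⁻¹)) := by
            exact tsum_congr fun n => (hcongr n).symm
        _ = a m ^ p * ∑' n : {k : ℕ // 2 ≤ k}, Real.log (m:ℕ) ^ (1/q) *
            (((n : ℕ) : ℝ)⁻¹ * (Real.log (n:ℕ)) ^ (-(1/q)) *
              (Real.log (m:ℕ) + Real.log (n:ℕ))⁻¹) := by
            rw [← tsum_mul_left]
        _ ≤ a m ^ p * (π / Real.sin (π * (1/q))) :=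
            mul_le_mul_of_nonneg_left hle (Real.rpow_nonneg (hanneg m) p)
        _ = C * a m ^ p := by rw [hCq]; ring
  have hGcol : ∀ n, Summable (fun m : {k : ℕ // 2 ≤ k} => G (m, n) ^ q) ∧
      ∑' m : {k : ℕ // 2 ≤ k}, G (m, n) ^ q ≤ C * b n ^ q := by
    intro n
    obtain ⟨hs, hle⟩ := key_sum' hrp0 hrp1 n
    have hcongr : ∀ m : {k : ℕ // 2 ≤ k}, b n ^ q * (Real.log (n:ℕ) ^ (1/p) *
        (((m : ℕ) : ℝ)⁻¹ * (Real.log (m:ℕ)) ^ (-(1/p)) *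
          (Real.log (n:ℕ) + Real.log (m:ℕ))⁻¹)) = G (m, n) ^ q := fun m =>
      (hGq (m, n)).symm
    constructor
    · exact Summable.congr (hs.mul_left (b n ^ q)) hcongr
    · calc ∑' m : {k : ℕ // 2 ≤ k}, G (m, n) ^ q
          = ∑' m : {k : ℕ // 2 ≤ k}, b n ^ q * (Real.log (n:ℕ) ^ (1/p) *
            (((m : ℕ) : ℝ)⁻¹ * (Real.log (m:ℕ)) ^ (-(1/p)) *
              (Real.log (n:ℕ) + Real.log (m:ℕ))⁻¹)) := by
            exact tsum_congr fun m => (hcongr m).symm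
        _ = b n ^ q * ∑' m : {k : ℕ // 2 ≤ k}, Real.log (n:ℕ) ^ (1/p) *
            (((m : ℕ) : ℝ)⁻¹ * (Real.log (m:ℕ)) ^ (-(1/p)) *
              (Real.log (n:ℕ) + Real.log (m:ℕ))⁻¹) := by
            rw [← tsum_mul_left]
        _ ≤ b n ^ q * (π / Real.sin (π * (1/p))) :=
            mul_le_mul_of_nonneg_left hle (Real.rpow_nonneg (hbnneg n) q)
        _ = C * b n ^ q := by rw [hCp]; ring
  -- summability over product
  have hFsp : Summable (fun mn => F mn ^ p) := by
    rw [summable_prod_of_nonneg (fun mn => Real.rpow_nonneg (hFnn mn) p)]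
    exact ⟨fun m => (hFcol m).1,
      Summable.of_nonneg_of_le (fun m => tsum_nonneg fun n => Real.rpow_nonneg (hFnn _) p)
        (fun m => (hFcol m).2) (ha.mul_left C)⟩
  have hGsp : Summable (fun mn => G mn ^ q) := by
    have h := (summable_prod_of_nonneg
      (f := fun nm : {k : ℕ // 2 ≤ k} × {k : ℕ // 2 ≤ k} => G (nm.2, nm.1) ^ q)
      (fun nm => Real.rpow_nonneg (hGnn _) q)).2
      ⟨fun n => (hGcol n).1,
        Summable.of_nonneg_of_le (fun n => tsum_nonneg fun m => Real.rpow_nonneg (hGnn _) q)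
          (fun n => (hGcol n).2) (hb.mul_left C)⟩
    have := (Equiv.prodComm _ _).summable_iff
      (f := fun mn : {k : ℕ // 2 ≤ k} × {k : ℕ // 2 ≤ k} => G mn ^ q)
    exact this.1 h
  -- Hölder
  obtain ⟨hFG, hFGle⟩ := summable_and_inner_le_Lp_mul_Lq_tsum_of_nonneg hpq hFnn hGnn hFsp hGsp
  -- pointwise identity for the summand
  have hT : ∀ mn : {k : ℕ // 2 ≤ k} × {k : ℕ // 2 ≤ k},
      a mn.1 * b mn.2 * ((mn.1 : ℕ) : ℝ) ^ (-(1/q)) * ((mn.2 : ℕ) : ℝ) ^ (-(1/p))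
        / (Real.log (mn.1 : ℕ) + Real.log (mn.2 : ℕ)) = F mn * G mn := by
    intro mn
    have hm := hlog mn.1; have hn := hlog mn.2; have hmn := hlog2 mn
    have e1 : (Real.log (mn.1:ℕ) / Real.log (mn.2:ℕ)) ^ (1/(p*q)) *
        (Real.log (mn.2:ℕ) / Real.log (mn.1:ℕ)) ^ (1/(p*q)) = 1 := by
      have hmne := hm.ne'; have hnne := hn.ne'
      rw [← Real.mul_rpow (by positivity) (by positivity),
        show Real.log (mn.1:ℕ) / Real.log (mn.2:ℕ) *
          (Real.log (mn.2:ℕ) / Real.log (mn.1:ℕ)) = 1 by field_simp, Real.one_rpow]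
    have e2 : (Real.log (mn.1:ℕ) + Real.log (mn.2:ℕ)) ^ (-(1/p)) *
        (Real.log (mn.1:ℕ) + Real.log (mn.2:ℕ)) ^ (-(1/q))
        = (Real.log (mn.1:ℕ) + Real.log (mn.2:ℕ))⁻¹ := by
      rw [← Real.rpow_add hmn, show -(1/p) + -(1/q) = -1 by linarith, Real.rpow_neg_one]
    have expand : F mn * G mn = (a mn.1 * b mn.2 * ((mn.1 : ℕ) : ℝ) ^ (-(1/q)) *
        ((mn.2 : ℕ) : ℝ) ^ (-(1/p))) *
        (((Real.log (mn.1:ℕ) / Real.log (mn.2:ℕ)) ^ (1/(p*q)) *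
          (Real.log (mn.2:ℕ) / Real.log (mn.1:ℕ)) ^ (1/(p*q))) *
        ((Real.log (mn.1:ℕ) + Real.log (mn.2:ℕ)) ^ (-(1/p)) *
          (Real.log (mn.1:ℕ) + Real.log (mn.2:ℕ)) ^ (-(1/q)))) := by
      rw [hFdef, hGdef]; ring
    rw [expand, e1, e2, one_mul, div_eq_mul_inv]
  -- rewrite LHS as a tsum over the product
  have hLHS : ∑' m : {k : ℕ // 2 ≤ k}, ∑' n : {k : ℕ // 2 ≤ k},
      a m * b n * ((m : ℕ) : ℝ) ^ (-(1/q)) * ((n : ℕ) : ℝ) ^ (-(1/p))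
        / (Real.log (m : ℕ) + Real.log (n : ℕ))
      = ∑' mn : {k : ℕ // 2 ≤ k} × {k : ℕ // 2 ≤ k}, F mn * G mn := by
    rw [Summable.tsum_prod hFG]
    exact tsum_congr fun m => tsum_congr fun n => hT (m, n)
  rw [hLHS]
  -- assemble
  have hAnn : 0 ≤ ∑' m, a m ^ p := tsum_nonneg fun m => Real.rpow_nonneg (hanneg m) p
  have hBnn : 0 ≤ ∑' n, b n ^ q := tsum_nonneg fun n => Real.rpow_nonneg (hbnneg n) q
  have hFtot : ∑' mn, F mn ^ p ≤ C * ∑' m, a m ^ p := by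
    rw [Summable.tsum_prod hFsp]
    calc ∑' m : {k : ℕ // 2 ≤ k}, ∑' n : {k : ℕ // 2 ≤ k}, F (m, n) ^ p
        ≤ ∑' m : {k : ℕ // 2 ≤ k}, C * a m ^ p := by
          apply Summable.tsum_le_tsum (fun m => (hFcol m).2) _ (ha.mul_left C)
          exact Summable.of_nonneg_of_le
            (fun m => tsum_nonneg fun n => Real.rpow_nonneg (hFnn _) p)
            (fun m => (hFcol m).2) (ha.mul_left C)
      _ = C * ∑' m, a m ^ p := tsum_mul_left
  have hGtot : ∑' mn, G mn ^ q ≤ C * ∑' n, b n ^ q := by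
    have hswap : ∑' mn : {k : ℕ // 2 ≤ k} × {k : ℕ // 2 ≤ k}, G mn ^ q
        = ∑' nm : {k : ℕ // 2 ≤ k} × {k : ℕ // 2 ≤ k}, G (nm.2, nm.1) ^ q := by
      exact ((Equiv.prodComm _ _).tsum_eq _).symm
    rw [hswap, Summable.tsum_prod (by
      rw [summable_prod_of_nonneg (fun nm => Real.rpow_nonneg (hGnn _) q)]
      exact ⟨fun n => (hGcol n).1,
        Summable.of_nonneg_of_le (fun n => tsum_nonneg fun m => Real.rpow_nonneg (hGnn _) q)
          (fun n => (hGcol n).2) (hb.mul_left C)⟩)]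
    calc ∑' n : {k : ℕ // 2 ≤ k}, ∑' m : {k : ℕ // 2 ≤ k}, G (m, n) ^ q
        ≤ ∑' n : {k : ℕ // 2 ≤ k}, C * b n ^ q := by
          apply Summable.tsum_le_tsum (fun n => (hGcol n).2) _ (hb.mul_left C)
          exact Summable.of_nonneg_of_le
            (fun n => tsum_nonneg fun m => Real.rpow_nonneg (hGnn _) q)
            (fun n => (hGcol n).2) (hb.mul_left C)
      _ = C * ∑' n, b n ^ q := tsum_mul_left
  calc ∑' mn, F mn * G mn
      ≤ (∑' mn, F mn ^ p) ^ (1/p) * (∑' mn, G mn ^ q) ^ (1/q) := hFGle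
    _ ≤ (C * ∑' m, a m ^ p) ^ (1/p) * (C * ∑' n, b n ^ q) ^ (1/q) := by
        apply mul_le_mul
        · exact Real.rpow_le_rpow (tsum_nonneg fun mn => Real.rpow_nonneg (hFnn _) p)
            hFtot hrp0.le
        · exact Real.rpow_le_rpow (tsum_nonneg fun mn => Real.rpow_nonneg (hGnn _) q)
            hGtot hrq0.le
        · exact Real.rpow_nonneg (tsum_nonneg fun mn => Real.rpow_nonneg (hGnn _) q) _
        · positivity
    _ = C * (∑' m, a m ^ p) ^ (1/p) * (∑' n, b n ^ q) ^ (1/q) := by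
        rw [Real.mul_rpow hC0.le hAnn, Real.mul_rpow hC0.le hBnn,
          show C ^ (1/p) * (∑' m, a m ^ p) ^ (1/p) * (C ^ (1/q) * (∑' n, b n ^ q) ^ (1/q))
            = C ^ (1/p) * C ^ (1/q) * ((∑' m, a m ^ p) ^ (1/p) * (∑' n, b n ^ q) ^ (1/q))
            by ring,
          ← Real.rpow_add hC0, h1, Real.rpow_one]
        ring
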